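/- For every tree T on 2^{<ω} with μ(Lim T) = a > 0 and every ε > 0 there is N ∈ ω such that for every n ≥ N there is a set t ⊆ 2^n ∩ T with |t| ≥ 2^n(a − ε) and such that for each η ∈ t, μ(Lim(T^{[η]})) > 2^{−n}(1 − ε). -/

import Mathlib

open MeasureTheory Pointwise

/-- Cantor space `2^ω` with componentwise addition mod 2. -/
abbrev Cantor : Type := ℕ → ZMod 2
/-- Finite binary sequences, the nodes of `2^{<ω}`. -/
abbrev FinSeq : Type := List (ZMod 2)

instance : TopologicalSpace (ZMod 2) := ⊥
instance : DiscreteTopology (ZMod 2) := ⟨rfl⟩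
noncomputable instance : MeasurableSpace Cantor := borel Cantor
instance : BorelSpace Cantor := ⟨rfl⟩

/-- The uniform (Lebesgue) product measure on `2^ω`, realized as the Haar measure of the
compact group `2^ω` normalized so that the whole space has measure 1. -/
noncomputable def μC : Measure Cantor := Measure.addHaarMeasure ⊤

/-- `X` is null-additive: `X + A` is null for every null `A`. -/
def NullAdditive (X : Set Cantor) : Prop := ∀ A : Set Cantor, μC A = 0 → μC (X + A) = 0

/-- `X` is meager-additive: `X + A` is meager for every meager `A`. -/
def MeagerAdditive (X : Set Cantor) : Prop := ∀ A : Set Cantor, IsMeagre A → IsMeagre (X + A)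

/-- A tree on `2^{<ω}`: nonempty, closed under initial segments, and every node has
extensions in the tree of every greater length. -/
def IsTree (T : Set FinSeq) : Prop :=
  T.Nonempty ∧ (∀ σ τ : FinSeq, σ <+: τ → τ ∈ T → σ ∈ T) ∧
    ∀ σ ∈ T, ∀ n, σ.length < n → ∃ τ ∈ T, σ <+: τ ∧ τ.length = n

/-- Restriction `x↾n` of `x ∈ 2^ω`. -/
def res (x : Cantor) (n : ℕ) : FinSeq := (List.range n).map x

/-- `Lim T = {x ∈ 2^ω : ∀ n, x↾n ∈ T}`. -/
def LimT (T : Set FinSeq) : Set Cantor := {x | ∀ n, res x n ∈ T}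

/-- A nowhere dense tree: every node has an extension outside the tree. -/
def NwdTree (T : Set FinSeq) : Prop := ∀ η ∈ T, ∃ τ : FinSeq, η <+: τ ∧ τ ∉ T

/-- Componentwise mod-2 addition of finite sequences (of the same length). -/
def finAdd : FinSeq → FinSeq → FinSeq := List.zipWith (· + ·)

/-- `T + S = {η + σ : η ∈ T, σ ∈ S, same length}`. -/
def treeSum (T S : Set FinSeq) : Set FinSeq :=
  {ρ | ∃ η ∈ T, ∃ σ ∈ S, η.length = σ.length ∧ ρ = finAdd η σ}

/-- `T^{[η]} = {τ ∈ T : τ ⊑ η or η ⊑ τ}`. -/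
def through (T : Set FinSeq) (η : FinSeq) : Set FinSeq := {τ ∈ T | τ <+: η ∨ η <+: τ}

/-- `A^{fin}`: points agreeing with some point of `A` at all but finitely many coordinates. -/
def finEq (A : Set Cantor) : Set Cantor := {y | ∃ x ∈ A, ∀ᶠ n in Filter.atTop, y n = x n}

/-- `U^{⟨ν⟩} = {τ : ν⌢τ ∈ U}`. -/
def above (U : Set FinSeq) (ν : FinSeq) : Set FinSeq := {τ | ν ++ τ ∈ U}

/-- A corset: a nondecreasing function `ω → ω \ {0}` tending to infinity. -/
def Corset (f : ℕ → ℕ) : Prop :=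
  Monotone f ∧ (∀ n, 0 < f n) ∧ Filter.Tendsto f Filter.atTop Filter.atTop

/-- `S` is of width `f`: `|S ∩ 2^n| ≤ f n` for all `n`. -/
def widthLe (S : Set FinSeq) (f : ℕ → ℕ) : Prop := ∀ n, {τ ∈ S | τ.length = n}.ncard ≤ f n

/-- `S` is almost of width `f`: `|S ∩ 2^n| ≤ f n` for all sufficiently large `n`. -/
def almostWidthLe (S : Set FinSeq) (f : ℕ → ℕ) : Prop :=
  ∀ᶠ n in Filter.atTop, {τ ∈ S | τ.length = n}.ncard ≤ f n

/-! ### Auxiliary development -/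

instance : μC.IsAddLeftInvariant := Measure.isAddLeftInvariant_addHaarMeasure ⊤

lemma muC_univ : μC Set.univ = 1 := by
  have h := Measure.addHaarMeasure_self (K₀ := (⊤ : TopologicalSpace.PositiveCompacts Cantor))
  simpa [μC, TopologicalSpace.PositiveCompacts.coe_top] using h

instance : IsProbabilityMeasure μC := ⟨muC_univ⟩

/-- The basic cylinder determined by a finite sequence. -/
def cyl (σ : FinSeq) : Set Cantor := {x | res x σ.length = σ}

lemma res_length (x : Cantor) (n : ℕ) : (res x n).length = n := by simp [res]

lemma res_getElem (x : Cantor) (n i : ℕ) (h : i < (res x n).length) :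
    (res x n)[i] = x i := by simp [res]

lemma res_eq_iff {x : Cantor} {n : ℕ} {σ : FinSeq} (hl : σ.length = n) :
    res x n = σ ↔ ∀ i, i < n → x i = σ.getD i 0 := by
  subst hl
  constructor
  · intro h i hi
    have h2 : i < (res x σ.length).length := by simpa [res] using hi
    have h3 := List.getElem_of_eq h h2
    rw [← res_getElem x σ.length i h2, h3, List.getD_eq_getElem]
  · intro h
    apply List.ext_getElem (by simp [res])
    intro i h1 h2
    rw [res_getElem, ← List.getD_eq_getElem σ 0 h2]
    exact h i h2

lemma res_prefix (x : Cantor) {m k : ℕ} (h : m ≤ k) : res x m <+: res x k := by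
  have : res x m = (res x k).take m := by
    rw [res, res, ← List.map_take, List.take_range, min_eq_left h]
  rw [this]; exact List.take_prefix _ _

lemma mem_cyl {x : Cantor} {σ : FinSeq} : x ∈ cyl σ ↔ res x σ.length = σ := Iff.rfl

lemma cyl_eq_iInter (σ : FinSeq) :
    cyl σ = ⋂ i ∈ Finset.range σ.length, {x : Cantor | x i = σ.getD i 0} := by
  ext x
  simp only [Set.mem_iInter, mem_cyl, Set.mem_setOf_eq, Finset.mem_range]
  rw [res_eq_iff rfl]

lemma isClopen_cyl (σ : FinSeq) : IsClopen (cyl σ) := by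
  rw [cyl_eq_iInter]
  apply isClopen_biInter_finset
  intro i _
  have : {x : Cantor | x i = σ.getD i 0} = (fun x : Cantor => x i) ⁻¹' {σ.getD i 0} := rfl
  rw [this]
  exact (isClopen_discrete _).preimage (continuous_apply i)

lemma measurableSet_cyl (σ : FinSeq) : MeasurableSet (cyl σ) :=
  ((isClopen_cyl σ).isOpen).measurableSet

lemma muC_cyl_congr {σ τ : FinSeq} (h : σ.length = τ.length) : μC (cyl σ) = μC (cyl τ) := by
  set c : Cantor := fun i => τ.getD i 0 - σ.getD i 0 with hc
  have key : (fun x => c + x) ⁻¹' cyl τ = cyl σ := by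
    ext x
    simp only [Set.mem_preimage, mem_cyl, res_eq_iff rfl]
    constructor
    · intro hx i hi
      have := hx i (h ▸ hi)
      have : (τ.getD i 0 - σ.getD i 0) + x i = τ.getD i 0 := this
      have := sub_eq_of_eq_add' this.symm
      rw [← this]; ring
    · intro hx i hi
      have := hx i (h ▸ hi)
      show (τ.getD i 0 - σ.getD i 0) + x i = τ.getD i 0
      rw [this]; ring
  rw [← key, measure_preimage_add]

lemma iUnion_cyl (n : ℕ) : (⋃ f : Fin n → ZMod 2, cyl (List.ofFn f)) = Set.univ := by
  ext x
  simp only [Set.mem_iUnion, Set.mem_univ, iff_true]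
  refine ⟨fun i => x i, ?_⟩
  rw [mem_cyl, res_eq_iff (by simp)]
  intro i hi
  rw [List.getD_eq_getElem _ _ (by simpa using hi), List.getElem_ofFn]

lemma disjoint_cyl {σ τ : FinSeq} (h : σ.length = τ.length) (hne : σ ≠ τ) :
    Disjoint (cyl σ) (cyl τ) := by
  rw [Set.disjoint_left]
  intro x hx hx'
  exact hne ((hx.symm.trans (by rw [h]; exact hx')))

lemma muC_cyl (σ : FinSeq) : μC (cyl σ) = (2 : ENNReal)⁻¹ ^ σ.length := by
  set n := σ.length with hn
  have hdisj : Pairwise (Function.onFun Disjoint fun f : Fin n → ZMod 2 => cyl (List.ofFn f)) := by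
    intro f g hfg
    exact disjoint_cyl (by simp) (fun e => hfg (List.ofFn_injective e))
  have h1 : (1 : ENNReal) = ∑ f : Fin n → ZMod 2, μC (cyl (List.ofFn f)) := by
    rw [← muC_univ, ← iUnion_cyl n, measure_iUnion hdisj fun f => measurableSet_cyl _,
      tsum_fintype]
  have h2 : ∀ f : Fin n → ZMod 2, μC (cyl (List.ofFn f)) = μC (cyl σ) := fun f =>
    muC_cyl_congr (by simp [hn])
  rw [Finset.sum_congr rfl fun f _ => h2 f, Finset.sum_const, Finset.card_univ] at h1
  have hcard : Fintype.card (Fin n → ZMod 2) = 2 ^ n := by simp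
  rw [hcard, nsmul_eq_mul] at h1
  push_cast at h1
  have h2n : ((2 : ENNReal) ^ n) ≠ 0 := by positivity
  have h2n' : ((2 : ENNReal) ^ n) ≠ ⊤ := by simp
  have : μC (cyl σ) = 1 / ((2:ENNReal)^n) := by
    rw [ENNReal.eq_div_iff h2n h2n', mul_comm]
    exact (mul_comm _ _).trans h1.symm
  rw [this]
  simp [ENNReal.inv_pow, one_div]

lemma finite_len (n : ℕ) : {σ : FinSeq | σ.length = n}.Finite := by
  apply Set.Finite.subset (Set.finite_range (fun f : Fin n → ZMod 2 => List.ofFn f))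
  intro σ hσ
  simp only [Set.mem_setOf_eq] at hσ
  subst hσ
  exact ⟨fun i => σ[(i:ℕ)], List.ofFn_getElem⟩

lemma finite_sub_len {T : Set FinSeq} (n : ℕ) : {σ ∈ T | σ.length = n}.Finite :=
  (finite_len n).subset (fun _ h => h.2)

/-- The `n`-th level approximation to `Lim T`. -/
def lev (T : Set FinSeq) (n : ℕ) : Set Cantor := {x | res x n ∈ T}

lemma lev_eq_biUnion (T : Set FinSeq) (n : ℕ) :
    lev T n = ⋃ σ ∈ {σ ∈ T | σ.length = n}, cyl σ := by
  ext x
  simp only [lev, Set.mem_setOf_eq, Set.mem_iUnion, mem_cyl]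
  constructor
  · intro h
    exact ⟨res x n, ⟨h, res_length x n⟩, by rw [res_length]⟩
  · rintro ⟨σ, ⟨hσT, hσl⟩, hx⟩
    rw [hσl] at hx; rw [hx]; exact hσT

lemma measurableSet_lev (T : Set FinSeq) (n : ℕ) : MeasurableSet (lev T n) := by
  rw [lev_eq_biUnion]
  exact (finite_sub_len n).measurableSet_biUnion (fun σ _ => measurableSet_cyl σ)

lemma antitone_lev {T : Set FinSeq} (hT : IsTree T) : Antitone (lev T) := by
  intro m k h x hx
  exact hT.2.1 _ _ (res_prefix x h) hx

lemma LimT_eq_iInter (T : Set FinSeq) : LimT T = ⋂ n, lev T n := by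
  ext x; simp [LimT, lev]

lemma measurableSet_LimT (T : Set FinSeq) : MeasurableSet (LimT T) := by
  rw [LimT_eq_iInter]; exact MeasurableSet.iInter (fun n => measurableSet_lev T n)

lemma muC_lev (T : Set FinSeq) (n : ℕ) :
    μC (lev T n) = {σ ∈ T | σ.length = n}.ncard * (2 : ENNReal)⁻¹ ^ n := by
  have hfin := finite_sub_len (T := T) n
  have he : (⋃ σ ∈ {σ ∈ T | σ.length = n}, cyl σ) = ⋃ σ ∈ hfin.toFinset, cyl σ := by
    simp [Set.Finite.mem_toFinset]
  have hdisj : (↑hfin.toFinset : Set FinSeq).PairwiseDisjoint cyl := by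
    intro σ hσ τ hτ hne
    simp only [Finset.coe_sort_coe, Set.Finite.coe_toFinset, Set.mem_setOf_eq] at hσ hτ
    exact disjoint_cyl (hσ.2.trans hτ.2.symm) hne
  rw [lev_eq_biUnion, he, measure_biUnion_finset hdisj (fun σ _ => measurableSet_cyl σ)]
  have : ∀ σ ∈ hfin.toFinset, μC (cyl σ) = (2 : ENNReal)⁻¹ ^ n := by
    intro σ hσ
    rw [Set.Finite.mem_toFinset] at hσ
    rw [muC_cyl, hσ.2]
  rw [Finset.sum_congr rfl this, Finset.sum_const, nsmul_eq_mul,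
    Set.ncard_eq_toFinset_card _ hfin]

lemma LimT_through (T : Set FinSeq) (η : FinSeq) :
    LimT (through T η) = LimT T ∩ cyl η := by
  ext x
  constructor
  · intro hx
    refine ⟨fun n => (hx n).1, ?_⟩
    rw [mem_cyl]
    rcases (hx η.length).2 with h | h
    · exact h.eq_of_length (res_length x η.length)
    · exact (h.eq_of_length (res_length x η.length).symm).symm
  · rintro ⟨hxT, hxc⟩ n
    refine ⟨hxT n, ?_⟩
    rcases le_or_gt n η.length with h | h
    · left; rw [← mem_cyl.mp hxc]; exact res_prefix x h
    · right; rw [← mem_cyl.mp hxc]; exact res_prefix x h.le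

/-- Lemma A. -/
theorem stmt10 (T : Set FinSeq) (hT : IsTree T) (a : ENNReal)
    (ha : μC (LimT T) = a) (h0 : 0 < a) (ε : ENNReal) (hε : 0 < ε) :
    ∃ N : ℕ, ∀ n, N ≤ n → ∃ t : Set FinSeq,
      t ⊆ {τ ∈ T | τ.length = n} ∧
      (2 : ENNReal) ^ n * (a - ε) ≤ t.ncard ∧
      ∀ η ∈ t, (2 : ENNReal)⁻¹ ^ n * (1 - ε) < μC (LimT (through T η)) := by
  rcases le_or_gt a ε with hae | hae
  · -- degenerate case: a - ε = 0, take t = ∅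
    refine ⟨0, fun n _ => ⟨∅, by simp, ?_, by simp⟩⟩
    rw [tsub_eq_zero_of_le hae]
    simp
  -- main case : ε < a ≤ 1
  have haT : a ≠ ⊤ := by
    rw [← ha]
    exact (measure_lt_top μC _).ne
  have ha1 : a ≤ 1 := by
    rw [← ha, ← muC_univ]
    exact measure_mono (Set.subset_univ _)
  have hεT : ε ≠ ⊤ := (hae.trans_le (le_top)).ne
  have hε1 : ε ≤ 1 := (hae.le.trans ha1)
  -- choose N
  have htendsto : Filter.Tendsto (μC ∘ lev T) Filter.atTop (nhds a) := by
    have := tendsto_measure_iInter_atTop (μ := μC)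
      (fun n => (measurableSet_lev T n).nullMeasurableSet) (antitone_lev hT)
      ⟨0, (measure_lt_top μC _).ne⟩
    rwa [← LimT_eq_iInter, ha] at this
  have hlt : a < a + ε * ε := ENNReal.lt_add_right haT (mul_ne_zero hε.ne' hε.ne')
  have hev := htendsto.eventually_lt_const hlt
  rw [Filter.eventually_atTop] at hev
  obtain ⟨N, hN⟩ := hev
  refine ⟨N, fun n hn => ?_⟩
  -- the candidate set
  set A := LimT T with hA
  set t : Set FinSeq :=
    {σ | (σ ∈ T ∧ σ.length = n) ∧ (2 : ENNReal)⁻¹ ^ n * (1 - ε) < μC (A ∩ cyl σ)} with ht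
  have htsub : t ⊆ {τ ∈ T | τ.length = n} := fun σ hσ => hσ.1
  have hTn := finite_sub_len (T := T) n
  have htfin : t.Finite := hTn.subset htsub
  refine ⟨t, htsub, ?_, ?_⟩
  swap
  · intro η hη
    rw [LimT_through]
    exact hη.2
  -- the counting argument
  have hAlev : ∀ m, A ⊆ lev T m := fun m x hx => hx m
  have hAmeas : MeasurableSet A := measurableSet_LimT T
  -- decompose μ A over the cylinders of level n
  have hbUeq : (⋃ σ ∈ hTn.toFinset, cyl σ) = lev T n := by
    rw [lev_eq_biUnion]
    apply Set.iUnion_congr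
    intro σ
    rw [Set.Finite.mem_toFinset]
  have hAeq : A = ⋃ σ ∈ hTn.toFinset, (A ∩ cyl σ) := by
    rw [← Set.inter_iUnion₂, hbUeq]
    exact (Set.inter_eq_left.mpr (hAlev n)).symm
  have hdisj : (↑hTn.toFinset : Set FinSeq).PairwiseDisjoint (fun σ => A ∩ cyl σ) := by
    intro σ hσ τ hτ hne
    simp only [Finset.coe_sort_coe, Set.Finite.coe_toFinset, Set.mem_setOf_eq] at hσ hτ
    exact Disjoint.mono Set.inter_subset_right Set.inter_subset_right
      (disjoint_cyl (hσ.2.trans hτ.2.symm) hne)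
  have hdecomp : a = ∑ σ ∈ hTn.toFinset, μC (A ∩ cyl σ) := by
    conv_lhs => rw [← ha]
    have : μC (LimT T) = μC A := by rw [hA]
    rw [this]
    conv_lhs => rw [hAeq]
    exact measure_biUnion_finset hdisj
      (fun σ _ => hAmeas.inter (measurableSet_cyl σ))
  -- the two finsets
  set tf := htfin.toFinset with htf
  have htfsub : tf ⊆ hTn.toFinset := by
    intro σ hσ
    rw [Set.Finite.mem_toFinset] at *
    exact htsub hσ
  set K := hTn.toFinset.card with hK
  set k := tf.card with hk
  have hkK : k ≤ K := Finset.card_le_card htfsub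
  -- split the sum
  have hsplit : a ≤ (K - k : ℕ) * ((2:ENNReal)⁻¹ ^ n * (1 - ε)) + (k : ℕ) * (2:ENNReal)⁻¹ ^ n := by
    rw [hdecomp, ← Finset.sum_sdiff htfsub]
    gcongr with σ hσ σ hσ
    · apply Finset.sum_le_card_nsmul _ _ _ ?_ |>.trans
      · rw [Finset.card_sdiff_of_subset htfsub, nsmul_eq_mul]
      · intro σ hσ
        rw [Finset.mem_sdiff, Set.Finite.mem_toFinset, Set.Finite.mem_toFinset] at hσ
        obtain ⟨hσ1, hσ2⟩ := hσ
        rw [ht, Set.mem_setOf_eq] at hσ2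
        push_neg at hσ2
        exact hσ2 ⟨hσ1.1, hσ1.2⟩
    · apply Finset.sum_le_card_nsmul _ _ _ ?_ |>.trans
      · rw [nsmul_eq_mul]
      · intro σ hσ
        rw [Set.Finite.mem_toFinset] at hσ
        calc μC (A ∩ cyl σ) ≤ μC (cyl σ) := measure_mono Set.inter_subset_right
        _ = (2:ENNReal)⁻¹ ^ n := by rw [muC_cyl, (htsub hσ).2]
  -- the width bound
  have hwidth : (K : ENNReal) * (2:ENNReal)⁻¹ ^ n < a + ε * ε := by
    have := hN n hn
    simp only [Function.comp_apply] at this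
    rwa [muC_lev, Set.ncard_eq_toFinset_card _ hTn] at this
  -- pass to the reals
  have hkn : t.ncard = k := Set.ncard_eq_toFinset_card _ htfin
  rw [hkn]
  set ar := a.toReal with har
  set er := ε.toReal with her'
  have her : 0 < er := ENNReal.toReal_pos hε.ne' hεT
  have hera : er < ar := by
    rw [har, her']
    exact ENNReal.toReal_strict_mono haT hae
  have har1 : ar ≤ 1 := by
    rw [har]
    calc a.toReal ≤ (1 : ENNReal).toReal := ENNReal.toReal_mono (by simp) ha1
    _ = 1 := by simp
  have her1 : er ≤ 1 := by
    rw [her']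
    calc ε.toReal ≤ (1 : ENNReal).toReal := ENNReal.toReal_mono (by simp) hε1
    _ = 1 := by simp
  set q := ((2:ℝ)⁻¹) ^ n with hq'
  have hq : 0 < q := by positivity
  have hq2 : (2:ℝ) ^ n * q = 1 := by
    rw [hq', inv_pow, mul_inv_cancel₀ (by positivity)]
  have htop1 : ((2:ENNReal)⁻¹ ^ n * (1 - ε)) ≠ ⊤ :=
    ENNReal.mul_ne_top (by simp [ENNReal.inv_pow]) (by
      exact (tsub_le_self.trans_lt (by simp : (1:ENNReal) < ⊤)).ne)
  have hq_toReal : ((2:ENNReal)⁻¹ ^ n).toReal = q := by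
    rw [ENNReal.toReal_pow, ENNReal.toReal_inv]
    simp [hq']
  have h1e_toReal : ((1:ENNReal) - ε).toReal = 1 - er := by
    rw [ENNReal.toReal_sub_of_le hε1 (by simp)]
    simp [her']
  -- real versions of the two bounds
  have hE1 : ar ≤ (((K - k : ℕ)):ℝ) * (q * (1 - er)) + k * q := by
    have hfin : ((K - k : ℕ) * ((2:ENNReal)⁻¹ ^ n * (1 - ε)) + (k : ℕ) * (2:ENNReal)⁻¹ ^ n) ≠ ⊤ := by
      apply ENNReal.add_ne_top.mpr
      constructor
      · exact ENNReal.mul_ne_top (ENNReal.natCast_ne_top _) htop1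
      · exact ENNReal.mul_ne_top (ENNReal.natCast_ne_top _) (by simp [ENNReal.inv_pow])
    have := ENNReal.toReal_mono hfin hsplit
    rw [ENNReal.toReal_add (ENNReal.mul_ne_top (ENNReal.natCast_ne_top _) htop1)
        (ENNReal.mul_ne_top (ENNReal.natCast_ne_top _) (by simp [ENNReal.inv_pow])),
      ENNReal.toReal_mul, ENNReal.toReal_mul, ENNReal.toReal_mul, hq_toReal, h1e_toReal] at this
    rw [ENNReal.toReal_natCast, ENNReal.toReal_natCast] at this
    exact this
  have hKk : (((K - k : ℕ)):ℝ) = (K:ℝ) - (k:ℝ) := Nat.cast_sub hkK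
  rw [hKk] at hE1
  have hE2 : (K:ℝ) * q ≤ ar + er * er := by
    have hfin2 : a + ε * ε ≠ ⊤ := ENNReal.add_ne_top.mpr ⟨haT, ENNReal.mul_ne_top hεT hεT⟩
    have := ENNReal.toReal_mono hfin2 hwidth.le
    rw [ENNReal.toReal_mul, hq_toReal, ENNReal.toReal_add haT (ENNReal.mul_ne_top hεT hεT),
      ENNReal.toReal_mul] at this
    simpa [har, her'] using this
  -- the key real inequality
  have h1er : (0:ℝ) ≤ 1 - er := by linarith
  have hkey : ar - er ≤ (k:ℝ) * q := by
    nlinarith [mul_le_mul_of_nonneg_right hE2 h1er, mul_pos her hq,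
      mul_nonneg (mul_nonneg (Nat.cast_nonneg k) hq.le) her.le, sq_nonneg er,
      mul_pos her her]
  -- conclude in ENNReal
  have hLfin : (2 : ENNReal) ^ n * (a - ε) ≠ ⊤ :=
    ENNReal.mul_ne_top (by simp) ((tsub_le_self.trans_lt haT.lt_top).ne)
  rw [← ENNReal.toReal_le_toReal hLfin (ENNReal.natCast_ne_top k)]
  rw [ENNReal.toReal_mul, ENNReal.toReal_pow, ENNReal.toReal_sub_of_le hae.le haT]
  simp only [ENNReal.toReal_ofNat, ENNReal.toReal_natCast]
  calc (2:ℝ) ^ n * (ar - er) ≤ (2:ℝ)^n * ((k:ℝ) * q) := by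
        apply mul_le_mul_of_nonneg_left hkey (by positivity)
  _ = (k:ℝ) * ((2:ℝ)^n * q) := by ring
  _ = k := by rw [hq2, mul_one]
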